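/- [Rate of the outer proximal iterations] In the setting of the inexact proximal method with step-size rule a_{i+1} = (1/(2‖F'(x_i)‖))^{(p−1)/p}·(p!/((p+1)L_p))^{1/p}, suppose that for a given ε > 0 one has F(x_k) − F* ≥ ε for 1 ≤ k ≤ K. Then for every 1 ≤ k ≤ K, the averaged point x̄_k = (Σ_{i=1}^k a_i x_i)/(Σ_{i=1}^k a_i) satisfies F(x̄_k) − F* ≤ [L_p·(‖x_0 − x*‖ + Σ_{i=1}^k δ_i)^{p+1} / k^{(p+1)/2}]·[(p+1)·2^{p−2}·V_k(ε)/p!], where V_k(ε) = (‖F'(x_0)‖·(‖x_0 − x*‖ + Σ_{i=1}^k δ_i)/ε)^{(p−1)/k}. -/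

import Mathlib

open scoped RealInnerProductSpace

/-- `g` is a subgradient of `φ` at `z`, relative to the set `s`. -/
def IsSubgradOn {E : Type*} [NormedAddCommGroup E] [InnerProductSpace ℝ E]
    (s : Set E) (φ : E → ℝ) (g z : E) : Prop :=
  ∀ y ∈ s, φ z + ⟪g, y - z⟫ ≤ φ y

private lemma limit_aux {L M C : ℝ} (hC : 0 ≤ C)
    (h : ∀ t : ℝ, 0 < t → t ≤ 1 → L ≤ M + t * C) : L ≤ M := by
  rcases eq_or_lt_of_le hC with h0 | h0
  · have h1 := h 1 one_pos le_rfl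
    rw [← h0] at h1; linarith
  · by_contra hc
    push_neg at hc
    have ht0 : 0 < min 1 ((L - M) / (2 * C)) :=
      lt_min one_pos (div_pos (by linarith) (by linarith))
    have ht := h _ ht0 (min_le_left _ _)
    have h1 : min 1 ((L - M) / (2 * C)) * C ≤ (L - M) / (2 * C) * C :=
      mul_le_mul_of_nonneg_right (min_le_right _ _) hC
    have h2 : (L - M) / (2 * C) * C = (L - M) / 2 := by field_simp
    linarith

private lemma icc_sum_eq_range {M : Type*} [AddCommMonoid M] (k : ℕ) (f : ℕ → M) :
    ∑ i ∈ Finset.Icc 1 k, f i = ∑ j ∈ Finset.range k, f (j + 1) := by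
  rw [← Finset.Ico_add_one_right_eq_Icc, Finset.sum_Ico_eq_sum_range]
  exact Finset.sum_congr (by norm_num) fun j _ => by rw [Nat.add_comm]

set_option maxHeartbeats 2000000

/-- Lemma 6.2 of the paper: rate of the outer proximal iterations. With the
step-size rule `a_{i+1} = (1/(2‖F'(x_i)‖))^{(p−1)/p}(p!/((p+1)L_p))^{1/p}`, if
`F(x_k) − F* ≥ ε` for `1 ≤ k ≤ K`, then the averaged point
`x̄_k = (Σ_{i=1}^k a_i x_i)/(Σ_{i=1}^k a_i)` satisfies
`F(x̄_k) − F* ≤ [L_p(‖x_0 − x*‖ + Σδ_i)^{p+1}/k^{(p+1)/2}]·[(p+1)2^{p−2}V_k(ε)/p!]`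
with `V_k(ε) = (‖F'(x_0)‖(‖x_0 − x*‖ + Σδ_i)/ε)^{(p−1)/k}`. -/
theorem inexact_prox_outer_rate
    {E : Type*} [NormedAddCommGroup E] [InnerProductSpace ℝ E] [FiniteDimensional ℝ E]
    (p : ℕ) (hp : 2 ≤ p) (Lp : ℝ) (hLp : 0 < Lp)
    (F : E → ℝ) (domF : Set E) (hFconv : ConvexOn ℝ domF F)
    (hcl : IsClosed domF) (hlsc : LowerSemicontinuousOn F domF)
    (xstar : E) (hxstar : xstar ∈ domF) (hmin : ∀ y ∈ domF, F xstar ≤ F y)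
    (Fstar : ℝ) (hFstar : Fstar = F xstar)
    (x g : ℕ → E) (a δ : ℕ → ℝ)
    (hx : ∀ i, x i ∈ domF)
    (hδ : ∀ i, 1 ≤ i → 0 ≤ δ i)
    (hsub : ∀ i, 1 ≤ i → ∀ y ∈ domF,
      a i * F (x i) + ‖x i - x (i - 1)‖ ^ 2 / 2 + ⟪g i, y - x i⟫ ≤
        a i * F y + ‖y - x (i - 1)‖ ^ 2 / 2)
    (hg : ∀ i, 1 ≤ i → ‖g i‖ ≤ δ i)
    (Fp : ℕ → E) (hFp : ∀ i, 1 ≤ i → Fp i = (a i)⁻¹ • (g i - (x i - x (i - 1))))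
    (hFp0 : IsSubgradOn domF F (Fp 0) (x 0))
    (hFpne : ∀ i, Fp i ≠ 0)
    (harule : ∀ i : ℕ, a (i + 1) =
      (1 / (2 * ‖Fp i‖)) ^ (((p : ℝ) - 1) / p)
        * ((Nat.factorial p : ℝ) / (((p : ℝ) + 1) * Lp)) ^ ((1 : ℝ) / p))
    (ε : ℝ) (hε : 0 < ε) (K : ℕ)
    (hlower : ∀ k : ℕ, 1 ≤ k → k ≤ K → ε ≤ F (x k) - Fstar) :
    ∀ k : ℕ, 1 ≤ k → k ≤ K →
      F ((∑ i ∈ Finset.Icc 1 k, a i)⁻¹ • ∑ i ∈ Finset.Icc 1 k, a i • x i) - Fstar ≤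
        Lp * (‖x 0 - xstar‖ + ∑ i ∈ Finset.Icc 1 k, δ i) ^ (p + 1)
            / (k : ℝ) ^ (((p : ℝ) + 1) / 2)
          * (((p : ℝ) + 1) * 2 ^ (p - 2)
            * ((‖Fp 0‖ * (‖x 0 - xstar‖ + ∑ i ∈ Finset.Icc 1 k, δ i) / ε)
                ^ (((p : ℝ) - 1) / k))
            / (Nat.factorial p : ℝ)) := by
  intro k hk1 hkK
  have hp0 : (0:ℝ) < (p:ℝ) := by exact_mod_cast (by omega : 0 < p)
  have hpne : (p:ℝ) ≠ 0 := hp0.ne'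
  have hk0 : (0:ℝ) < (k:ℝ) := by exact_mod_cast (by omega : 0 < k)
  have hkne : (k:ℝ) ≠ 0 := hk0.ne'
  have hγ : ∀ i, (0:ℝ) < ‖Fp i‖ := fun i => norm_pos_iff.mpr (hFpne i)
  have hP1 : (0:ℝ) < (p:ℝ) + 1 := by positivity
  set d : ℝ := (Nat.factorial p : ℝ) with hd
  clear_value d
  have hdpos : (0:ℝ) < d := by rw [hd]; exact_mod_cast p.factorial_pos
  set c : ℝ := (d / (((p:ℝ) + 1) * Lp)) ^ ((1:ℝ) / p) with hc
  clear_value c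
  have hcpos : 0 < c := by rw [hc]; exact Real.rpow_pos_of_pos (by positivity) _
  set θ : ℝ := ((p:ℝ) - 1) / p with hθ
  clear_value θ
  have hapos : ∀ i, 1 ≤ i → 0 < a i := by
    intro i hi
    obtain ⟨j, rfl⟩ : ∃ j, i = j + 1 := ⟨i - 1, by omega⟩
    rw [harule]
    have := hγ j
    exact mul_pos (Real.rpow_pos_of_pos (by positivity) _) hcpos
  -- Step 1: Fp i is a subgradient of F at x i (on domF), for i ≥ 1.
  have hsubgrad : ∀ i, 1 ≤ i → ∀ y ∈ domF, F (x i) + ⟪Fp i, y - x i⟫ ≤ F y := by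
    intro i hi y hy
    have hai := hapos i hi
    have hstar : ∀ z ∈ domF,
        a i * F (x i) + ⟪g i - (x i - x (i-1)), z - x i⟫ ≤ a i * F z + ‖z - x i‖^2 / 2 := by
      intro z hz
      have h0 := hsub i hi z hz
      have hdecomp : z - x (i-1) = (z - x i) + (x i - x (i-1)) := by abel
      have hexp : ‖z - x (i-1)‖^2
          = ‖z - x i‖^2 + 2 * ⟪z - x i, x i - x (i-1)⟫ + ‖x i - x (i-1)‖^2 := by
        rw [hdecomp, norm_add_sq_real]
      have hinner : ⟪g i - (x i - x (i-1)), z - x i⟫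
          = ⟪g i, z - x i⟫ - ⟪z - x i, x i - x (i-1)⟫ := by
        rw [inner_sub_left, real_inner_comm (x i - x (i-1))]
      rw [hinner]; rw [hexp] at h0; linarith
    have hkey : ∀ t : ℝ, 0 < t → t ≤ 1 →
        a i * F (x i) + ⟪g i - (x i - x (i-1)), y - x i⟫
          ≤ a i * F y + t * (‖y - x i‖^2 / 2) := by
      intro t ht0 ht1
      have hmem : (1 - t) • x i + t • y ∈ domF :=
        hFconv.1 (hx i) hy (by linarith) ht0.le (by ring)
      have hzeq : x i + t • (y - x i) = (1 - t) • x i + t • y := by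
        rw [smul_sub, sub_smul, one_smul]; abel
      have h1 := hstar (x i + t • (y - x i)) (hzeq ▸ hmem)
      have h2 : (x i + t • (y - x i)) - x i = t • (y - x i) := by abel
      rw [h2, real_inner_smul_right] at h1
      have h3 : F (x i + t • (y - x i)) ≤ (1 - t) * F (x i) + t * F y := by
        rw [hzeq]; exact hFconv.2 (hx i) hy (by linarith) ht0.le (by ring)
      have hns : ‖t • (y - x i)‖^2 = t^2 * ‖y - x i‖^2 := by
        rw [norm_smul, mul_pow, Real.norm_eq_abs, sq_abs]
      rw [hns] at h1
      have h5 : a i * F (x i + t • (y - x i)) ≤ a i * ((1 - t) * F (x i) + t * F y) :=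
        mul_le_mul_of_nonneg_left h3 hai.le
      have h6 : t * (a i * F (x i) + ⟪g i - (x i - x (i-1)), y - x i⟫)
          ≤ t * (a i * F y + t * (‖y - x i‖^2 / 2)) := by nlinarith [h1, h5]
      exact le_of_mul_le_mul_left h6 ht0
    have hC : (0:ℝ) ≤ ‖y - x i‖^2 / 2 := by positivity
    have hfin := limit_aux hC hkey
    have hane : a i ≠ 0 := hai.ne'
    have hsmul : a i • Fp i = g i - (x i - x (i-1)) := by
      rw [hFp i hi, smul_inv_smul₀ hane]
    rw [← hsmul, real_inner_smul_left] at hfin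
    have h7 : a i * (F (x i) + ⟪Fp i, y - x i⟫) ≤ a i * F y := by ring_nf; ring_nf at hfin; linarith
    exact le_of_mul_le_mul_left h7 hai
  have hΔ0 : ∀ i, 0 ≤ F (x i) - Fstar := fun i => by
    rw [hFstar]; linarith [hmin (x i) (hx i)]
  -- Step 2: the per-step key inequality.
  have hstep : ∀ j : ℕ,
      (a (j+1) * ‖Fp (j+1)‖)^2 + 2 * (a (j+1) * (F (x (j+1)) - Fstar)) + ‖x (j+1) - xstar‖^2
        ≤ (‖x j - xstar‖ + δ (j+1))^2 := by
    intro j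
    have hi : 1 ≤ j + 1 := Nat.le_add_left 1 j
    have hai := hapos (j+1) hi
    have hane : a (j+1) ≠ 0 := hai.ne'
    have hsmul : a (j+1) • Fp (j+1) = g (j+1) - (x (j+1) - x j) := by
      have h := hFp (j+1) hi
      simp only [Nat.add_sub_cancel] at h
      rw [h, smul_inv_smul₀ hane]
    set m : E := g (j+1) + (x j - xstar) - (x (j+1) - xstar) with hm
    have hm' : a (j+1) • Fp (j+1) = m := by rw [hsmul, hm]; abel
    have hnm : ‖m‖ = a (j+1) * ‖Fp (j+1)‖ := by
      rw [← hm', norm_smul, Real.norm_eq_abs, abs_of_pos hai]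
    have hΔ : F (x (j+1)) - Fstar ≤ ⟪Fp (j+1), x (j+1) - xstar⟫ := by
      have h0 := hsubgrad (j+1) hi xstar hxstar
      have h1 : ⟪Fp (j+1), xstar - x (j+1)⟫ = - ⟪Fp (j+1), x (j+1) - xstar⟫ := by
        rw [← inner_neg_right, neg_sub]
      rw [hFstar]; linarith
    have hinner_m : a (j+1) * (F (x (j+1)) - Fstar) ≤ ⟪m, x (j+1) - xstar⟫ := by
      rw [← hm', real_inner_smul_left]
      exact mul_le_mul_of_nonneg_left hΔ hai.le
    have hexp : ‖m‖^2 = ‖g (j+1) + (x j - xstar)‖^2 - 2 * ⟪m, x (j+1) - xstar⟫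
        - ‖x (j+1) - xstar‖^2 := by
      have h1 : ‖m‖^2 = ‖g (j+1) + (x j - xstar)‖^2
          - 2 * ⟪g (j+1) + (x j - xstar), x (j+1) - xstar⟫ + ‖x (j+1) - xstar‖^2 := by
        rw [hm]; exact norm_sub_sq_real _ _
      have h3 : ⟪g (j+1) + (x j - xstar), x (j+1) - xstar⟫
          = ⟪m, x (j+1) - xstar⟫ + ‖x (j+1) - xstar‖^2 := by
        have h2 : g (j+1) + (x j - xstar) = m + (x (j+1) - xstar) := by rw [hm]; abel
        rw [h2, inner_add_left, real_inner_self_eq_norm_sq]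
      rw [h3] at h1; linarith
    have hgn : ‖g (j+1) + (x j - xstar)‖ ≤ ‖x j - xstar‖ + δ (j+1) := by
      have := hg (j+1) hi
      have := norm_add_le (g (j+1)) (x j - xstar)
      linarith
    have hgn2 : ‖g (j+1) + (x j - xstar)‖^2 ≤ (‖x j - xstar‖ + δ (j+1))^2 := by
      have h4 : (0:ℝ) ≤ ‖g (j+1) + (x j - xstar)‖ := norm_nonneg _
      nlinarith
    have hnm2 : ‖m‖^2 = (a (j+1) * ‖Fp (j+1)‖)^2 := by rw [hnm]
    linarith
  -- Step 3: radius control and telescoped sums.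
  set R : ℝ := ‖x 0 - xstar‖ + ∑ i ∈ Finset.Icc 1 k, δ i with hRdef
  clear_value R
  have hR0succ : ∀ j : ℕ, ‖x 0 - xstar‖ + ∑ i ∈ Finset.Icc 1 (j+1), δ i
      = (‖x 0 - xstar‖ + ∑ i ∈ Finset.Icc 1 j, δ i) + δ (j+1) := by
    intro j; rw [Finset.sum_Icc_succ_top (Nat.le_add_left 1 j)]; ring
  have hrR : ∀ i, ‖x i - xstar‖ ≤ ‖x 0 - xstar‖ + ∑ j ∈ Finset.Icc 1 i, δ j := by
    intro i
    induction i with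
    | zero =>
      rw [Finset.Icc_eq_empty (by omega : ¬(1:ℕ) ≤ 0)]
      simp
    | succ j ih =>
      have h1 := hstep j
      have hb2 : (0:ℝ) ≤ (a (j+1) * ‖Fp (j+1)‖)^2 := sq_nonneg _
      have haΔ : (0:ℝ) ≤ a (j+1) * (F (x (j+1)) - Fstar) :=
        mul_nonneg (hapos (j+1) (Nat.le_add_left 1 j)).le (hΔ0 (j+1))
      have hδ1 := hδ (j+1) (Nat.le_add_left 1 j)
      have hr1 : ‖x (j+1) - xstar‖ ≤ ‖x j - xstar‖ + δ (j+1) := by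
        nlinarith [norm_nonneg (x (j+1) - xstar), norm_nonneg (x j - xstar)]
      rw [hR0succ j]; linarith
  set f : ℕ → ℝ := fun i => (‖x 0 - xstar‖ + ∑ l ∈ Finset.Icc 1 i, δ l)^2 - ‖x i - xstar‖^2
    with hf
  clear_value f
  have hsum2 : ∑ j ∈ Finset.range k,
      ((a (j+1) * ‖Fp (j+1)‖)^2 + 2 * (a (j+1) * (F (x (j+1)) - Fstar))) ≤ R^2 := by
    have hle : ∀ j ∈ Finset.range k,
        (a (j+1) * ‖Fp (j+1)‖)^2 + 2 * (a (j+1) * (F (x (j+1)) - Fstar))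
          ≤ f (j+1) - f j := by
      intro j _
      simp only [hf]
      have h1 := hstep j
      have h3 := hrR j
      have h4 := hδ (j+1) (Nat.le_add_left 1 j)
      have h5 := hR0succ j
      nlinarith [norm_nonneg (x j - xstar)]
    calc ∑ j ∈ Finset.range k,
        ((a (j+1) * ‖Fp (j+1)‖)^2 + 2 * (a (j+1) * (F (x (j+1)) - Fstar)))
        ≤ ∑ j ∈ Finset.range k, (f (j+1) - f j) := Finset.sum_le_sum hle
      _ = f k - f 0 := Finset.sum_range_sub f k
      _ ≤ R^2 := by
        simp only [hf]
        rw [Finset.Icc_eq_empty (by omega : ¬(1:ℕ) ≤ 0), ← hRdef]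
        simp only [Finset.sum_empty, add_zero]
        nlinarith [sq_nonneg (‖x k - xstar‖)]
  have heqsplit : ∑ j ∈ Finset.range k,
      ((a (j+1) * ‖Fp (j+1)‖)^2 + 2 * (a (j+1) * (F (x (j+1)) - Fstar)))
      = (∑ j ∈ Finset.range k, (a (j+1) * ‖Fp (j+1)‖)^2)
        + 2 * ∑ j ∈ Finset.range k, (a (j+1) * (F (x (j+1)) - Fstar)) := by
    rw [Finset.sum_add_distrib, ← Finset.mul_sum]
  have hBnonneg : 0 ≤ ∑ j ∈ Finset.range k, (a (j+1) * ‖Fp (j+1)‖)^2 :=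
    Finset.sum_nonneg fun j _ => sq_nonneg _
  have hSnonneg : 0 ≤ ∑ j ∈ Finset.range k, (a (j+1) * (F (x (j+1)) - Fstar)) :=
    Finset.sum_nonneg fun j _ =>
      mul_nonneg (hapos _ (Nat.le_add_left 1 j)).le (hΔ0 _)
  rw [heqsplit] at hsum2
  have hSsum : ∑ j ∈ Finset.range k, (a (j+1) * (F (x (j+1)) - Fstar)) ≤ R^2 / 2 := by
    have h2S : 2 * ∑ j ∈ Finset.range k, (a (j+1) * (F (x (j+1)) - Fstar)) ≤ R^2 :=
      le_trans (le_add_of_nonneg_left hBnonneg) hsum2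
    linarith [h2S]
  have hBsum : ∑ j ∈ Finset.range k, (a (j+1) * ‖Fp (j+1)‖)^2 ≤ R^2 := by
    have := mul_nonneg (by norm_num : (0:ℝ) ≤ 2) hSnonneg
    linarith [hsum2, this]
  have hrRk : ‖x k - xstar‖ ≤ R := by rw [hRdef]; exact hrR k
  have hεk : ε ≤ ‖Fp k‖ * R := by
    have h1 := hlower k hk1 hkK
    have h2 := hsubgrad k hk1 xstar hxstar
    have h3 : ⟪Fp k, x k - xstar⟫ ≤ ‖Fp k‖ * ‖x k - xstar‖ := real_inner_le_norm _ _
    have h4 : ‖Fp k‖ * ‖x k - xstar‖ ≤ ‖Fp k‖ * R :=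
      mul_le_mul_of_nonneg_left hrRk (norm_nonneg _)
    have h5 : ⟪Fp k, xstar - x k⟫ = - ⟪Fp k, x k - xstar⟫ := by
      rw [← inner_neg_right, neg_sub]
    rw [hFstar] at h1; linarith
  have hRpos : 0 < R := by nlinarith [hγ k]
  -- Step 4: products and AM-GM.
  have h1k : ∀ j : ℕ, 1 ≤ j + 1 := fun j => Nat.le_add_left 1 j
  have hp2 : (2:ℝ) ≤ (p:ℝ) := by exact_mod_cast hp
  have hbpos : ∀ j : ℕ, 0 < a (j+1) * ‖Fp (j+1)‖ := fun j =>
    mul_pos (hapos _ (h1k j)) (hγ _)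
  set PA : ℝ := ∏ j ∈ Finset.range k, a (j+1) with hPA
  set Pβ : ℝ := ∏ j ∈ Finset.range k, (a (j+1) * ‖Fp (j+1)‖) with hPβ
  set W : ℝ := ∏ j ∈ Finset.range k, (2 * ‖Fp j‖) with hW
  have hPApos : 0 < PA := by
    rw [hPA]; exact Finset.prod_pos fun j _ => hapos _ (h1k j)
  have hPβpos : 0 < Pβ := by rw [hPβ]; exact Finset.prod_pos fun j _ => hbpos j
  have hWpos : 0 < W := by
    rw [hW]; exact Finset.prod_pos fun j _ => by have := hγ j; positivity
  have hwsum : ∑ _j ∈ Finset.range k, (1:ℝ)/k = 1 := by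
    rw [Finset.sum_const, Finset.card_range, nsmul_eq_mul]; field_simp
  have hA_am : (k:ℝ) * PA ^ ((1:ℝ)/(k:ℝ)) ≤ ∑ j ∈ Finset.range k, a (j+1) := by
    have hgm1 : ∏ j ∈ Finset.range k, (a (j+1)) ^ ((1:ℝ)/(k:ℝ))
        ≤ ∑ j ∈ Finset.range k, ((1:ℝ)/k) * a (j+1) :=
      Real.geom_mean_le_arith_mean_weighted _ _ _ (fun i _ => by positivity) hwsum
        (fun i _ => (hapos _ (h1k i)).le)
    have h1 : PA ^ ((1:ℝ)/(k:ℝ)) = ∏ j ∈ Finset.range k, (a (j+1)) ^ ((1:ℝ)/(k:ℝ)) := by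
      rw [hPA, ← Real.finset_prod_rpow _ _ (fun i _ => (hapos _ (h1k i)).le)]
    have h2 : ∑ j ∈ Finset.range k, ((1:ℝ)/k) * a (j+1)
        = (∑ j ∈ Finset.range k, a (j+1))/k := by
      rw [← Finset.mul_sum]; ring
    rw [h1]
    have h3 : (k:ℝ) * ∏ j ∈ Finset.range k, (a (j+1)) ^ ((1:ℝ)/(k:ℝ))
        ≤ (k:ℝ) * ((∑ j ∈ Finset.range k, a (j+1))/k) := by
      apply mul_le_mul_of_nonneg_left _ hk0.le
      rw [← h2]; exact hgm1
    calc (k:ℝ) * ∏ j ∈ Finset.range k, (a (j+1)) ^ ((1:ℝ)/(k:ℝ))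
        ≤ (k:ℝ) * ((∑ j ∈ Finset.range k, a (j+1))/k) := h3
      _ = ∑ j ∈ Finset.range k, a (j+1) := by field_simp
  have hPβR : Pβ ≤ (R^2/k) ^ ((k:ℝ)/2) := by
    have hgm2 : ∏ j ∈ Finset.range k, ((a (j+1) * ‖Fp (j+1)‖)^2) ^ ((1:ℝ)/(k:ℝ))
        ≤ ∑ j ∈ Finset.range k, ((1:ℝ)/k) * (a (j+1) * ‖Fp (j+1)‖)^2 :=
      Real.geom_mean_le_arith_mean_weighted _ _ _ (fun i _ => by positivity) hwsum
        (fun i _ => sq_nonneg _)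
    have h1 : ∏ j ∈ Finset.range k, ((a (j+1) * ‖Fp (j+1)‖)^2) ^ ((1:ℝ)/(k:ℝ))
        = (Pβ^2) ^ ((1:ℝ)/(k:ℝ)) := by
      rw [Real.finset_prod_rpow _ _ (fun i _ => sq_nonneg _), Finset.prod_pow, ← hPβ]
    have h2 : (Pβ^2 : ℝ) ^ ((1:ℝ)/(k:ℝ)) = Pβ ^ ((2:ℝ)/(k:ℝ)) := by
      rw [← Real.rpow_natCast Pβ 2, ← Real.rpow_mul hPβpos.le]
      congr 1
      push_cast
      ring
    have h3 : ∑ j ∈ Finset.range k, ((1:ℝ)/k) * (a (j+1) * ‖Fp (j+1)‖)^2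
        = (∑ j ∈ Finset.range k, (a (j+1) * ‖Fp (j+1)‖)^2)/k := by
      rw [← Finset.mul_sum]; ring
    rw [h1, h2, h3] at hgm2
    have h4 : Pβ ^ ((2:ℝ)/(k:ℝ)) ≤ R^2/k :=
      hgm2.trans ((div_le_div_iff_of_pos_right hk0).mpr hBsum)
    have h5 : (Pβ ^ ((2:ℝ)/(k:ℝ))) ^ ((k:ℝ)/2) = Pβ := by
      rw [← Real.rpow_mul hPβpos.le, show (2:ℝ)/(k:ℝ) * ((k:ℝ)/2) = 1 by field_simp,
        Real.rpow_one]
    calc Pβ = (Pβ ^ ((2:ℝ)/(k:ℝ))) ^ ((k:ℝ)/2) := h5.symm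
      _ ≤ (R^2/k) ^ ((k:ℝ)/2) :=
        Real.rpow_le_rpow (Real.rpow_nonneg hPβpos.le _) h4 (by positivity)
  -- product identities
  have hPAeq : PA = c^k / W^θ := by
    rw [hPA, hW]
    rw [Finset.prod_congr rfl (fun j (_ : j ∈ Finset.range k) => harule j),
      Finset.prod_mul_distrib, Finset.prod_const, Finset.card_range,
      Real.finset_prod_rpow _ _ (fun i _ => by have := hγ i; positivity),
      Finset.prod_div_distrib, Finset.prod_const_one,
      Real.div_rpow zero_le_one (Finset.prod_nonneg fun i _ => by have := hγ i; positivity),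
      Real.one_rpow]
    ring
  have hPβsplit : Pβ = PA * ∏ j ∈ Finset.range k, ‖Fp (j+1)‖ := by
    rw [hPβ, hPA, ← Finset.prod_mul_distrib]
  have hshift : (∏ j ∈ Finset.range k, ‖Fp (j+1)‖) * ‖Fp 0‖
      = (∏ j ∈ Finset.range k, ‖Fp j‖) * ‖Fp k‖ := by
    rw [← Finset.prod_range_succ' (fun j => ‖Fp j‖) k, Finset.prod_range_succ]
  have hWsplit : W = 2^k * ∏ j ∈ Finset.range k, ‖Fp j‖ := by
    rw [hW, Finset.prod_mul_distrib, Finset.prod_const, Finset.card_range]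
  have hWPA : W * PA * ‖Fp k‖ = 2^k * ‖Fp 0‖ * Pβ := by
    rw [hWsplit, hPβsplit]
    linear_combination (-((2:ℝ)^k * PA)) * hshift
  have hckpos : (0:ℝ) < c^k := pow_pos hcpos k
  have hWθpos : (0:ℝ) < W^θ := Real.rpow_pos_of_pos hWpos θ
  have hW1θ : W ^ ((1:ℝ) - θ) = 2^k * ‖Fp 0‖ * Pβ / (‖Fp k‖ * c^k) := by
    have hWθ : W^θ = c^k / PA := by rw [hPAeq]; field_simp
    rw [Real.rpow_sub hWpos, Real.rpow_one, hWθ, div_div_eq_mul_div,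
      div_eq_div_iff hckpos.ne' (mul_pos (hγ k) hckpos).ne']
    linear_combination (c^k) * hWPA
  -- Step 5: upper bound for W^(θ/k)
  set V : ℝ := (‖Fp 0‖ * R / ε) ^ (((p:ℝ) - 1) / (k:ℝ)) with hV
  clear_value V
  have hVpos : 0 < V := by
    rw [hV]; exact Real.rpow_pos_of_pos (div_pos (mul_pos (hγ 0) hRpos) hε) _
  have hepos : (0:ℝ) ≤ ((p:ℝ) - 1) / (k:ℝ) := div_nonneg (by linarith) hk0.le
  have hθp : ((1:ℝ) - θ) * (((p:ℝ) - 1) / (k:ℝ)) = θ / (k:ℝ) := by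
    rw [hθ]; field_simp; ring
  have hWθk : W ^ (θ / (k:ℝ)) = (W ^ ((1:ℝ) - θ)) ^ (((p:ℝ) - 1) / (k:ℝ)) := by
    rw [← Real.rpow_mul hWpos.le, hθp]
  have hZ : 2^k * ‖Fp 0‖ * Pβ / (‖Fp k‖ * c^k)
      ≤ (‖Fp 0‖ * R / ε) * ((R^2/k) ^ ((k:ℝ)/2)) * 2^k / c^k := by
    have h1 : (1:ℝ)/‖Fp k‖ ≤ R/ε := by
      rw [div_le_div_iff₀ (hγ k) hε]; linarith
    have h2 : (0:ℝ) ≤ 2^k * ‖Fp 0‖ / c^k :=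
      div_nonneg (mul_nonneg (by positivity) (hγ 0).le) hckpos.le
    calc 2^k * ‖Fp 0‖ * Pβ / (‖Fp k‖ * c^k)
        = (2^k * ‖Fp 0‖ / c^k) * (Pβ * ((1:ℝ)/‖Fp k‖)) := by
          field_simp [(hγ k).ne', hckpos.ne']
          try ring
          try tauto
      _ ≤ (2^k * ‖Fp 0‖ / c^k) * (((R^2/k) ^ ((k:ℝ)/2)) * (R/ε)) := by
          apply mul_le_mul_of_nonneg_left _ h2
          exact mul_le_mul hPβR h1 (by positivity) (Real.rpow_nonneg (by positivity) _)
      _ = (‖Fp 0‖ * R / ε) * ((R^2/k) ^ ((k:ℝ)/2)) * 2^k / c^k := by ring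
  have hWfin : W ^ (θ / (k:ℝ))
      ≤ (R^2/k) ^ (((p:ℝ) - 1)/2) * V * 2 ^ ((p:ℝ) - 1) / c ^ ((p:ℝ) - 1) := by
    rw [hWθk, hW1θ]
    have hb1 : (0:ℝ) ≤ 2^k * ‖Fp 0‖ * Pβ / (‖Fp k‖ * c^k) := by
      apply div_nonneg _ (mul_nonneg (hγ k).le hckpos.le)
      exact mul_nonneg (mul_nonneg (by positivity) (hγ 0).le) hPβpos.le
    have h5 := Real.rpow_le_rpow hb1 hZ hepos
    refine h5.trans_eq ?_
    have hnn1 : (0:ℝ) ≤ ‖Fp 0‖ * R / ε := (div_pos (mul_pos (hγ 0) hRpos) hε).le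
    have hnn2 : (0:ℝ) ≤ (R^2/k) ^ ((k:ℝ)/2) := Real.rpow_nonneg (by positivity) _
    rw [Real.div_rpow (by positivity : (0:ℝ) ≤ (‖Fp 0‖ * R / ε) * ((R^2/k) ^ ((k:ℝ)/2)) * 2^k) hckpos.le,
      Real.mul_rpow (mul_nonneg hnn1 hnn2) (by positivity : (0:ℝ) ≤ ((2:ℝ))^k),
      Real.mul_rpow hnn1 hnn2]
    have e1 : ((R^2/k) ^ ((k:ℝ)/2)) ^ (((p:ℝ) - 1)/(k:ℝ)) = (R^2/k) ^ (((p:ℝ) - 1)/2) := by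
      rw [← Real.rpow_mul (by positivity : (0:ℝ) ≤ R^2/(k:ℝ))]
      congr 1
      field_simp
    have e2 : ((2:ℝ)^k) ^ (((p:ℝ) - 1)/(k:ℝ)) = (2:ℝ) ^ ((p:ℝ) - 1) := by
      rw [← Real.rpow_natCast 2 k, ← Real.rpow_mul (by norm_num : (0:ℝ) ≤ 2)]
      congr 1
      field_simp
    have e3 : (c^k) ^ (((p:ℝ) - 1)/(k:ℝ)) = c ^ ((p:ℝ) - 1) := by
      rw [← Real.rpow_natCast c k, ← Real.rpow_mul hcpos.le]
      congr 1
      field_simp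
    have e4 : (‖Fp 0‖ * R / ε) ^ (((p:ℝ) - 1)/(k:ℝ)) = V := hV.symm
    rw [e1, e2, e3, e4]
    ring
  -- Step 6: lower bound for A
  have hWθkpos : 0 < W ^ (θ / (k:ℝ)) := Real.rpow_pos_of_pos hWpos _
  have hUbpos : 0 < (R^2/k) ^ (((p:ℝ) - 1)/2) * V * 2 ^ ((p:ℝ) - 1) / c ^ ((p:ℝ) - 1) := by
    apply div_pos _ (Real.rpow_pos_of_pos hcpos _)
    exact mul_pos (mul_pos (Real.rpow_pos_of_pos (by positivity) _) hVpos)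
      (Real.rpow_pos_of_pos two_pos _)
  have hA_low : (k:ℝ) * c / ((R^2/k) ^ (((p:ℝ) - 1)/2) * V * 2 ^ ((p:ℝ) - 1) / c ^ ((p:ℝ) - 1))
      ≤ ∑ j ∈ Finset.range k, a (j+1) := by
    have h1 : PA ^ ((1:ℝ)/(k:ℝ)) = c / W ^ (θ/(k:ℝ)) := by
      rw [hPAeq, Real.div_rpow hckpos.le (Real.rpow_nonneg hWpos.le θ)]
      congr 1
      · rw [← Real.rpow_natCast c k, ← Real.rpow_mul hcpos.le,
          show (k:ℝ) * ((1:ℝ)/(k:ℝ)) = 1 by field_simp, Real.rpow_one]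
      · rw [← Real.rpow_mul hWpos.le]
        congr 1
        ring
    have h2 : (k:ℝ) * (c / W ^ (θ/(k:ℝ))) ≤ ∑ j ∈ Finset.range k, a (j+1) := by
      rw [← h1]; exact hA_am
    refine le_trans ?_ h2
    rw [mul_div_assoc]
    apply mul_le_mul_of_nonneg_left _ hk0.le
    exact (div_le_div_iff_of_pos_left hcpos hUbpos hWθkpos).mpr hWfin
  -- Step 7: Jensen's inequality and conclusion.
  set A : ℝ := ∑ i ∈ Finset.Icc 1 k, a i with hA
  have hAr : A = ∑ j ∈ Finset.range k, a (j+1) := by rw [hA]; exact icc_sum_eq_range k a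
  clear_value A
  have hApos : 0 < A := by
    rw [hAr]
    exact Finset.sum_pos (fun j _ => hapos _ (h1k j)) ⟨0, Finset.mem_range.mpr (by omega)⟩
  have hjensen : F (A⁻¹ • ∑ i ∈ Finset.Icc 1 k, a i • x i)
      ≤ A⁻¹ * ∑ i ∈ Finset.Icc 1 k, a i * F (x i) := by
    have h0 : 0 < ∑ i ∈ Finset.Icc 1 k, a i := by rw [← hA]; exact hApos
    have h1 := hFconv.map_centerMass_le
      (fun i (hi : i ∈ Finset.Icc 1 k) => (hapos i (Finset.mem_Icc.mp hi).1).le)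
      h0 (fun i _ => hx i)
    simp only [Finset.centerMass, Function.comp, smul_eq_mul] at h1
    rw [← hA] at h1
    exact h1
  have hfold : A⁻¹ * ∑ i ∈ Finset.Icc 1 k, a i * F (x i) - Fstar
      = A⁻¹ * ∑ j ∈ Finset.range k, (a (j+1) * (F (x (j+1)) - Fstar)) := by
    have h2 : ∑ j ∈ Finset.range k, (a (j+1) * (F (x (j+1)) - Fstar))
        = ∑ i ∈ Finset.Icc 1 k, a i * (F (x i) - Fstar) :=
      (icc_sum_eq_range k fun i => a i * (F (x i) - Fstar)).symm
    have h3 : ∑ i ∈ Finset.Icc 1 k, a i * (F (x i) - Fstar)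
        = (∑ i ∈ Finset.Icc 1 k, a i * F (x i)) - A * Fstar := by
      rw [hA, Finset.sum_mul, ← Finset.sum_sub_distrib]
      exact Finset.sum_congr rfl fun i _ => by ring
    rw [h2, h3]
    field_simp
    try ring
  -- the key constant identity
  have e5 : d = (c * c ^ ((p:ℝ) - 1)) * (((p:ℝ) + 1) * Lp) := by
    have h1 : c * c ^ ((p:ℝ) - 1) = c ^ ((1:ℝ) + ((p:ℝ) - 1)) := by
      rw [Real.rpow_add hcpos, Real.rpow_one]
    have h2 : c ^ ((1:ℝ) + ((p:ℝ) - 1)) = d / (((p:ℝ) + 1) * Lp) := by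
      rw [show (1:ℝ) + ((p:ℝ) - 1) = (p:ℝ) by ring, hc,
        ← Real.rpow_mul (div_pos hdpos (mul_pos hP1 hLp)).le,
        show (1:ℝ)/(p:ℝ) * (p:ℝ) = 1 by field_simp, Real.rpow_one]
    rw [h1, h2]
    field_simp
  have e6 : (R^2/(k:ℝ)) ^ (((p:ℝ) - 1)/2) = R ^ ((p:ℝ) - 1) / (k:ℝ) ^ (((p:ℝ) - 1)/2) := by
    rw [Real.div_rpow (sq_nonneg R) hk0.le]
    congr 1
    rw [← Real.rpow_natCast R 2, ← Real.rpow_mul hRpos.le]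
    congr 1
    push_cast
    ring
  have e7 : R ^ (p+1) = R ^ ((p:ℝ) - 1) * R^2 := by
    rw [← Real.rpow_natCast R (p+1), ← Real.rpow_natCast R 2, ← Real.rpow_add hRpos]
    congr 1
    push_cast
    ring
  have e8 : (k:ℝ) ^ (((p:ℝ) + 1)/2) = (k:ℝ) ^ (((p:ℝ) - 1)/2) * k := by
    rw [show ((p:ℝ) + 1)/2 = ((p:ℝ) - 1)/2 + 1 by ring, Real.rpow_add_one hkne]
  have e9 : (2:ℝ) ^ (p - 2) = 2 ^ ((p:ℝ) - 1) / 2 := by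
    rw [← Real.rpow_natCast 2 (p - 2),
      show ((p - 2 : ℕ):ℝ) = ((p:ℝ) - 1) - 1 by rw [Nat.cast_sub hp]; push_cast; ring,
      Real.rpow_sub two_pos, Real.rpow_one]
  have hRHSge : (0:ℝ) ≤ Lp * R ^ (p+1) / (k:ℝ) ^ (((p:ℝ) + 1)/2)
      * (((p:ℝ) + 1) * 2 ^ (p - 2) * V / d) := by
    apply mul_nonneg
    · exact div_nonneg (mul_nonneg hLp.le (pow_nonneg hRpos.le _)) (Real.rpow_nonneg hk0.le _)
    · exact div_nonneg (mul_nonneg (mul_nonneg hP1.le (by positivity)) hVpos.le) hdpos.le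
  have hid : ((k:ℝ) * c / ((R^2/k) ^ (((p:ℝ) - 1)/2) * V * 2 ^ ((p:ℝ) - 1) / c ^ ((p:ℝ) - 1)))
      * (Lp * R ^ (p+1) / (k:ℝ) ^ (((p:ℝ) + 1)/2) * (((p:ℝ) + 1) * 2 ^ (p - 2) * V / d))
      = R^2/2 := by
    rw [e5, e6, e7, e8, e9]
    have hkp2 : (0:ℝ) < (k:ℝ) ^ (((p:ℝ) - 1)/2) := Real.rpow_pos_of_pos hk0 _
    have hcp1 : (0:ℝ) < c ^ ((p:ℝ) - 1) := Real.rpow_pos_of_pos hcpos _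
    have h2p1 : (0:ℝ) < (2:ℝ) ^ ((p:ℝ) - 1) := Real.rpow_pos_of_pos two_pos _
    have hRp1 : (0:ℝ) < R ^ ((p:ℝ) - 1) := Real.rpow_pos_of_pos hRpos _
    field_simp
  set Alow : ℝ := (k:ℝ) * c / ((R^2/k) ^ (((p:ℝ) - 1)/2) * V * 2 ^ ((p:ℝ) - 1) / c ^ ((p:ℝ) - 1))
    with hAlowdef
  have hAlowA : Alow ≤ A := by rw [← hAr] at hA_low; exact hA_low
  have hALow1 : A⁻¹ * Alow ≤ 1 := by
    rw [inv_mul_eq_div]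
    exact (div_le_one hApos).mpr hAlowA
  calc F (A⁻¹ • ∑ i ∈ Finset.Icc 1 k, a i • x i) - Fstar
      ≤ A⁻¹ * ∑ j ∈ Finset.range k, (a (j+1) * (F (x (j+1)) - Fstar)) := by
        rw [← hfold]; linarith [hjensen]
    _ ≤ A⁻¹ * (R^2/2) := mul_le_mul_of_nonneg_left hSsum (inv_nonneg.mpr hApos.le)
    _ = (A⁻¹ * Alow) * (Lp * R ^ (p+1) / (k:ℝ) ^ (((p:ℝ) + 1)/2)
          * (((p:ℝ) + 1) * 2 ^ (p - 2) * V / d)) := by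
        rw [← hid]; ring
    _ ≤ 1 * (Lp * R ^ (p+1) / (k:ℝ) ^ (((p:ℝ) + 1)/2)
          * (((p:ℝ) + 1) * 2 ^ (p - 2) * V / d)) :=
        mul_le_mul_of_nonneg_right hALow1 hRHSge
    _ = Lp * R ^ (p+1) / (k:ℝ) ^ (((p:ℝ) + 1)/2)
          * (((p:ℝ) + 1) * 2 ^ (p - 2) * V / d) := one_mul _
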